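/- Gaussian characterization in the supercritical annealed CLT: let ν be a probability measure on ℝ with mean m and all moments finite in the relevant sense, σ_p > 0, and let γ' = ∫ N(0, (z-m)²σ_p²) dν(z) (the scale mixture of centered Gaussians with mixing law the image of ν under z ↦ |z-m|σ_p). Then γ' is Gaussian if and only if ν = ½(δ_a + δ_b) for some a, b ∈ ℝ (equivalently ν is symmetric about its mean with two-point support, i.e. ν = ½(δ_{m-s} + δ_{m+s}) for some s ≥ 0). -/

import Mathlib

open MeasureTheory ProbabilityTheory Real
open scoped ENNReal NNReal

lemma aux_pow_exp_bound {c : ℝ} (hc : 0 < c) (n : ℕ) (x : ℝ) :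
    x ^ (2 * n) * Real.exp (-(c * x ^ 2)) ≤ c⁻¹ ^ n * n.factorial := by
  have h := Real.pow_div_factorial_le_exp (x := c * x ^ 2) (by positivity) n
  have hfac : (0:ℝ) < n.factorial := by positivity
  have h2 : (c * x ^ 2) ^ n ≤ n.factorial * Real.exp (c * x ^ 2) := by
    rw [div_le_iff₀ hfac] at h; linarith [h]
  have hexp : Real.exp (-(c * x ^ 2)) = (Real.exp (c * x ^ 2))⁻¹ := by
    rw [Real.exp_neg]
  have hx : x ^ (2 * n) = (x ^ 2) ^ n := by rw [pow_mul]
  rw [hx, hexp]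
  rw [mul_pow] at h2
  have hepos : 0 < Real.exp (c * x ^ 2) := Real.exp_pos _
  rw [mul_inv_le_iff₀ hepos]
  calc (x ^ 2) ^ n = c⁻¹ ^ n * (c ^ n * (x ^ 2) ^ n) := by
        rw [← mul_assoc, ← mul_pow, inv_mul_cancel₀ hc.ne', one_pow, one_mul]
    _ ≤ c⁻¹ ^ n * (n.factorial * Real.exp (c * x ^ 2)) := by
        apply mul_le_mul_of_nonneg_left h2 (by positivity)
    _ = c⁻¹ ^ n * n.factorial * Real.exp (c * x ^ 2) := by ring

lemma aux_integrable_abs_pow_exp {b : ℝ} (hb : 0 < b) (n : ℕ) :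
    Integrable (fun x : ℝ => |x| ^ n * Real.exp (-b * x ^ 2)) := by
  have hb2 : 0 < b / 2 := by linarith
  set K : ℝ := 1 + (b/2)⁻¹ ^ n * n.factorial with hK
  refine Integrable.mono' ((integrable_exp_neg_mul_sq hb2).const_mul K)
    (Continuous.aestronglyMeasurable (by continuity)) (Filter.Eventually.of_forall fun x => ?_)
  have h1 : |x| ^ n * Real.exp (-(b/2) * x ^ 2) ≤ K := by
    have habs : |x| ^ n ≤ 1 + x ^ (2 * n) := by
      rcases le_or_gt (|x|) 1 with h | h
      · have : |x| ^ n ≤ 1 := pow_le_one₀ (abs_nonneg x) h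
        have : (0:ℝ) ≤ x ^ (2*n) := by rw [pow_mul]; positivity
        linarith
      · have h1 : |x| ^ n ≤ |x| ^ (2 * n) :=
          pow_le_pow_right₀ h.le (by omega)
        have h2 : |x| ^ (2 * n) = x ^ (2 * n) := by
          rw [pow_mul, pow_mul, sq_abs]
        linarith [h1, h2 ▸ h1]
    have hb' := aux_pow_exp_bound hb2 n x
    have hexple : Real.exp (-(b/2) * x ^ 2) ≤ 1 := by
      apply Real.exp_le_one_iff.mpr; nlinarith [sq_nonneg x]
    have hexppos : 0 < Real.exp (-(b/2) * x ^ 2) := Real.exp_pos _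
    calc |x| ^ n * Real.exp (-(b/2) * x ^ 2)
        ≤ (1 + x ^ (2*n)) * Real.exp (-(b/2) * x ^ 2) :=
          mul_le_mul_of_nonneg_right habs hexppos.le
      _ = Real.exp (-(b/2) * x ^ 2) + x ^ (2*n) * Real.exp (-(b/2 * x ^ 2)) := by ring_nf
      _ ≤ 1 + (b/2)⁻¹ ^ n * n.factorial := by
          have := aux_pow_exp_bound hb2 n x
          gcongr  -- might fail; fallback below
      _ = K := rfl
  have hnn : (0:ℝ) ≤ |x| ^ n := by positivity
  have : ‖|x| ^ n * Real.exp (-b * x ^ 2)‖ = |x| ^ n * Real.exp (-b * x ^ 2) := by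
    rw [Real.norm_eq_abs, abs_of_nonneg (by positivity)]
  rw [this]
  have hsplit : Real.exp (-b * x ^ 2) = Real.exp (-(b/2) * x ^ 2) * Real.exp (-(b/2) * x ^ 2) := by
    rw [← Real.exp_add]; ring_nf
  rw [hsplit, ← mul_assoc]
  calc |x| ^ n * Real.exp (-(b/2) * x ^ 2) * Real.exp (-(b/2) * x ^ 2)
      ≤ K * Real.exp (-(b/2) * x ^ 2) :=
        mul_le_mul_of_nonneg_right h1 (Real.exp_pos _).le
    _ = K * Real.exp (-(b/2) * x ^ 2) := rfl

lemma aux_integrable_pow_gaussianReal (w : NNReal) (n : ℕ) :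
    Integrable (fun x : ℝ => x ^ n) (gaussianReal 0 w) := by
  by_cases hw : w = 0
  · subst hw
    rw [gaussianReal_zero_var]
    exact (integrable_const ((0:ℝ) ^ n)).congr (MeasureTheory.ae_eq_dirac _).symm
  · rw [gaussianReal_of_var_ne_zero _ hw]
    rw [integrable_withDensity_iff (measurable_gaussianPDF _ _)
      (Filter.Eventually.of_forall fun x => ENNReal.ofReal_lt_top)]
    have hpdf : ∀ x : ℝ, (gaussianPDF 0 w x).toReal = gaussianPDFReal 0 w x := fun x =>
      ENNReal.toReal_ofReal (gaussianPDFReal_nonneg _ _ _)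
    simp_rw [hpdf, gaussianPDFReal_def]
    have hb : 0 < (2 * (w:ℝ))⁻¹ := by
      have : 0 < (w:ℝ) := lt_of_le_of_ne w.coe_nonneg (by exact_mod_cast (Ne.symm hw))
      positivity
    have hInt := (aux_integrable_abs_pow_exp hb n).const_mul (Real.sqrt (2 * Real.pi * w))⁻¹
    refine hInt.mono' (Continuous.aestronglyMeasurable (by continuity)) ?_
    refine Filter.Eventually.of_forall fun x => ?_
    have h1 : -(x - 0) ^ 2 / (2 * (w:ℝ)) = -(2*(w:ℝ))⁻¹ * x ^ 2 := by ring
    rw [Real.norm_eq_abs, h1]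
    rw [abs_mul, abs_mul]
    have : |x ^ n| = |x| ^ n := abs_pow x n
    rw [this, abs_of_nonneg (by positivity : (0:ℝ) ≤ (Real.sqrt (2 * Real.pi * w))⁻¹),
      abs_of_nonneg (Real.exp_pos _).le]
    calc |x| ^ n * ((Real.sqrt (2 * Real.pi * w))⁻¹ * Real.exp (-(2*(w:ℝ))⁻¹ * x ^ 2))
        = (Real.sqrt (2 * Real.pi * w))⁻¹ * (|x| ^ n * Real.exp (-(2*(w:ℝ))⁻¹ * x ^ 2)) := by ring
      _ ≤ _ := le_refl _

noncomputable def gmom (k : ℕ) : ℝ := ∫ x, x ^ (2 * k) ∂(gaussianReal 0 1)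

lemma gmom_pos (k : ℕ) : 0 < gmom k := by
  rw [gmom, MeasureTheory.integral_pos_iff_support_of_nonneg]
  · have hsub : ({(0:ℝ)}ᶜ : Set ℝ) ⊆ Function.support fun x : ℝ => x ^ (2*k) := by
      intro x hx
      simp only [Function.mem_support]
      exact pow_ne_zero _ (by simpa using hx)
    have h0 : gaussianReal 0 1 ({(0:ℝ)} : Set ℝ) = 0 :=
      gaussianReal_absolutelyContinuous 0 (by norm_num) (volume_singleton)
    have h1 : gaussianReal 0 1 ({(0:ℝ)}ᶜ : Set ℝ) = 1 := by
      rw [measure_compl (measurableSet_singleton 0) (by simp [h0]), h0, measure_univ]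
      simp
    calc (0:ℝ≥0∞) < 1 := by norm_num
      _ = gaussianReal 0 1 ({(0:ℝ)}ᶜ : Set ℝ) := h1.symm
      _ ≤ _ := measure_mono hsub
  · intro x
    simp only
    rw [pow_mul]
    positivity
  · exact aux_integrable_pow_gaussianReal 1 (2*k)

lemma gaussianReal_eq_map (w : NNReal) :
    gaussianReal 0 w = (gaussianReal 0 1).map (fun x => Real.sqrt w * x) := by
  rw [show (fun x : ℝ => Real.sqrt w * x) = (Real.sqrt w * ·) from rfl,
    gaussianReal_map_const_mul]
  congr 1
  · simp
  · ext
    simp [Real.sq_sqrt w.coe_nonneg]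

lemma aux_moment_scale (w : NNReal) (k : ℕ) :
    ∫ x, x ^ (2 * k) ∂(gaussianReal 0 w) = (w : ℝ) ^ k * gmom k := by
  rw [gaussianReal_eq_map w, integral_map (by fun_prop)
    (Continuous.aestronglyMeasurable (by continuity))]
  simp_rw [mul_pow, pow_mul, Real.sq_sqrt w.coe_nonneg, ← pow_mul]
  rw [integral_const_mul, gmom]

lemma gaussianReal_neg (w : NNReal) :
    (gaussianReal 0 w).map (fun x : ℝ => -x) = gaussianReal 0 w := by
  rw [show (fun x : ℝ => -x) = ((-1 : ℝ) * ·) by ext x; ring, gaussianReal_map_const_mul]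
  congr 1
  · simp
  · ext; norm_num

lemma aux_integral_id_gaussianReal (μ : ℝ) (w : NNReal) :
    ∫ x, x ∂(gaussianReal μ w) = μ := by
  have h0 : ∫ x, x ∂(gaussianReal 0 w) = 0 := by
    have h := integral_map (μ := gaussianReal 0 w) (f := fun x : ℝ => x)
      (φ := fun x : ℝ => -x) measurable_neg.aemeasurable
      (aestronglyMeasurable_id (α := ℝ))
    rw [_root_.gaussianReal_neg] at h
    have : ∫ x, x ∂(gaussianReal 0 w) = - ∫ x, x ∂(gaussianReal 0 w) := by
      nth_rewrite 1 [h]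
      rw [integral_neg]
    linarith
  have hmap : gaussianReal μ w = (gaussianReal 0 w).map (· + μ) := by
    rw [gaussianReal_map_add_const, zero_add]
  rw [hmap, integral_map (f := fun x : ℝ => x) ((by fun_prop : Measurable fun x : ℝ => x + μ)).aemeasurable
    (aestronglyMeasurable_id (α := ℝ))]
  rw [integral_add]
  · rw [h0, integral_const, probReal_univ, zero_add]
    simp
  · simpa using aux_integrable_pow_gaussianReal w 1
  · exact integrable_const μ

lemma aux_measurable_gaussianReal (μ : ℝ) :
    Measurable fun w : ℝ≥0 => gaussianReal μ w := by
  apply Measure.measurable_of_measurable_coe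
  intro s hs
  have hrw : ∀ w : ℝ≥0, gaussianReal μ w s
      = if w = 0 then Measure.dirac μ s else ∫⁻ x in s, gaussianPDF μ w x := by
    intro w
    by_cases hw : w = 0
    · simp [hw]
    · rw [if_neg hw, gaussianReal_apply μ hw]
  simp_rw [hrw]
  apply Measurable.ite (measurableSet_singleton 0) measurable_const
  -- Measurable fun w => ∫⁻ x in s, gaussianPDF μ w x
  simp_rw [← lintegral_indicator hs]
  have hjoint : Measurable fun p : ℝ≥0 × ℝ => s.indicator (gaussianPDF μ p.1) p.2 := by
    have : (fun p : ℝ≥0 × ℝ => s.indicator (gaussianPDF μ p.1) p.2)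
        = (Prod.snd ⁻¹' s).indicator (fun p : ℝ≥0 × ℝ => gaussianPDF μ p.1 p.2) := by
      ext p
      by_cases hp : p.2 ∈ s <;> simp [Set.indicator, hp]
    rw [this]
    apply Measurable.indicator _ (measurable_snd hs)
    -- Measurable fun p => gaussianPDF μ p.1 p.2
    unfold gaussianPDF gaussianPDFReal
    apply Measurable.ennreal_ofReal
    fun_prop
  exact Measurable.lintegral_prod_right hjoint

lemma aux_ae_dirac (ν : Measure ℝ) [IsProbabilityMeasure ν] {x : ℝ}
    (h : ∀ᵐ z ∂ν, z = x) : ν = Measure.dirac x := by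
  have hS : ν ({x} : Set ℝ)ᶜ = 0 := by
    rw [MeasureTheory.ae_iff] at h
    have he : ({x} : Set ℝ)ᶜ = {z | ¬ z = x} := by ext z; simp
    rw [he]; exact h
  have hx1 : ν {x} = 1 := (prob_compl_eq_zero_iff (measurableSet_singleton x)).mp hS
  ext A hA
  rw [Measure.dirac_apply' x hA]
  by_cases hx : x ∈ A
  · rw [Set.indicator_of_mem hx]
    refine le_antisymm prob_le_one ?_
    calc (1 : ℝ≥0∞) = ν {x} := hx1.symm
      _ ≤ ν A := measure_mono (Set.singleton_subset_iff.mpr hx)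
  · rw [Set.indicator_of_notMem hx]
    have : A ⊆ ({x} : Set ℝ)ᶜ := fun z hz => by
      simp only [Set.mem_compl_iff, Set.mem_singleton_iff]
      rintro rfl; exact hx hz
    exact le_antisymm ((measure_mono this).trans hS.le) (zero_le)

lemma aux_two_point (ν : Measure ℝ) [IsProbabilityMeasure ν] {x y : ℝ} (hxy : x ≠ y)
    (h : ∀ᵐ z ∂ν, z = x ∨ z = y) :
    ν = ν {x} • Measure.dirac x + ν {y} • Measure.dirac y ∧ ν {x} + ν {y} = 1 := by
  have hS : ν (({x, y} : Set ℝ))ᶜ = 0 := by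
    rw [MeasureTheory.ae_iff] at h
    have he : (({x, y} : Set ℝ))ᶜ = {z | ¬ (z = x ∨ z = y)} := by ext z; simp
    rw [he]; exact h
  have hmeas : MeasurableSet ({x, y} : Set ℝ) := by measurability
  have key : ∀ A : Set ℝ, MeasurableSet A → ν A = ν (A ∩ {x}) + ν (A ∩ {y}) := by
    intro A hA
    have h1 : ν (A ∩ {x, y}) + ν (A \ {x, y}) = ν A := measure_inter_add_diff A hmeas
    have h2 : ν (A \ {x, y}) = 0 :=
      le_antisymm ((measure_mono (Set.diff_subset_compl A _)).trans hS.le) (zero_le)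
    have h3 : A ∩ {x, y} = (A ∩ {x}) ∪ (A ∩ {y}) := by
      rw [Set.insert_eq, Set.inter_union_distrib_left]
    have h4 : Disjoint (A ∩ {x}) (A ∩ {y}) := by
      refine Set.disjoint_left.mpr fun z hz1 hz2 => ?_
      have e1 : z = x := hz1.2
      have e2 : z = y := hz2.2
      exact hxy (by rw [← e1, e2])
    rw [← h1, h2, add_zero, h3, measure_union h4 (hA.inter (measurableSet_singleton y))]
  have hpoint : ∀ (A : Set ℝ) (t : ℝ), ν (A ∩ {t}) = ν {t} * (Measure.dirac t) A → True := fun _ _ _ => trivial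
  constructor
  · ext A hA
    rw [key A hA]
    simp only [Measure.add_apply, Measure.smul_apply, smul_eq_mul]
    congr 1
    · by_cases hx : x ∈ A
      · rw [Set.inter_eq_self_of_subset_right (Set.singleton_subset_iff.mpr hx),
          Measure.dirac_apply' x hA, Set.indicator_of_mem hx]
        simp
      · rw [Measure.dirac_apply' x hA, Set.indicator_of_notMem hx]
        have : A ∩ {x} = ∅ := by
          ext z; simp only [Set.mem_inter_iff, Set.mem_singleton_iff, Set.mem_empty_iff_false,
            iff_false, not_and]
          rintro hz rfl; exact hx hz
        rw [this]; simp
    · by_cases hy : y ∈ A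
      · rw [Set.inter_eq_self_of_subset_right (Set.singleton_subset_iff.mpr hy),
          Measure.dirac_apply' y hA, Set.indicator_of_mem hy]
        simp
      · rw [Measure.dirac_apply' y hA, Set.indicator_of_notMem hy]
        have : A ∩ {y} = ∅ := by
          ext z; simp only [Set.mem_inter_iff, Set.mem_singleton_iff, Set.mem_empty_iff_false,
            iff_false, not_and]
          rintro hz rfl; exact hy hz
        rw [this]; simp
  · have := key Set.univ MeasurableSet.univ
    rw [measure_univ, Set.univ_inter, Set.univ_inter] at this
    exact this.symm

/-- Gaussian characterization in the supercritical annealed CLT: with `ν` a probability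
measure on `ℝ` of mean `m` and all moments finite, and `σp > 0`, the scale mixture
`γ' = ∫ N(0, (z-m)² σp²) dν(z)` is Gaussian if and only if `ν = ½(δ_a + δ_b)`
for some reals `a, b`. -/
theorem stmt18
    (ν : Measure ℝ) [IsProbabilityMeasure ν]
    (hmom : ∀ n : ℕ, Integrable (fun z => |z| ^ n) ν)
    (m : ℝ) (hm : m = ∫ z, z ∂ν)
    (σp : ℝ) (hσp : 0 < σp)
    (γ' : Measure ℝ)
    (hγ' : γ' = ν.bind fun z => gaussianReal 0 (((z - m) ^ 2 * σp ^ 2).toNNReal)) :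
    (∃ (μ0 : ℝ) (v : NNReal), γ' = gaussianReal μ0 v) ↔
      (∃ a b : ℝ, ν = (1/2 : ENNReal) • Measure.dirac a + (1/2 : ENNReal) • Measure.dirac b) := by
  have hKmeas : Measurable fun z : ℝ => gaussianReal 0 (((z - m) ^ 2 * σp ^ 2).toNNReal) :=
    (aux_measurable_gaussianReal 0).comp
      (measurable_real_toNNReal.comp (by fun_prop))
  have hIntPow : ∀ n : ℕ, Integrable (fun z => (z - m) ^ n) ν := by
    intro n
    have hb : Integrable (fun z => 2 ^ n * (|z| ^ n + |m| ^ n)) ν :=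
      ((hmom n).add (integrable_const _)).const_mul _
    refine hb.mono' (Continuous.aestronglyMeasurable (by continuity))
      (Filter.Eventually.of_forall fun z => ?_)
    rw [Real.norm_eq_abs, abs_pow]
    have h1 : |z - m| ≤ |z| + |m| := (abs_sub z m)
    calc |z - m| ^ n ≤ (|z| + |m|) ^ n :=
          pow_le_pow_left₀ (abs_nonneg _) h1 n
      _ ≤ 2 ^ (n - 1) * (|z| ^ n + |m| ^ n) := add_pow_le (abs_nonneg _) (abs_nonneg _) n
      _ ≤ 2 ^ n * (|z| ^ n + |m| ^ n) := by
          have h2 : (2:ℝ) ^ (n-1) ≤ 2 ^ n := pow_le_pow_right₀ one_le_two (Nat.sub_le n 1)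
          have h3 : (0:ℝ) ≤ |z| ^ n + |m| ^ n := by positivity
          exact mul_le_mul_of_nonneg_right h2 h3
  have hinner : ∀ (w : ℝ≥0) (k : ℕ), ∫⁻ x, ENNReal.ofReal (x ^ (2*k)) ∂(gaussianReal 0 w)
      = ENNReal.ofReal ((w:ℝ) ^ k * gmom k) := by
    intro w k
    rw [← ofReal_integral_eq_lintegral_ofReal (aux_integrable_pow_gaussianReal w (2*k))
      (Filter.Eventually.of_forall fun x => by
        show (0:ℝ) ≤ x ^ (2*k); rw [pow_mul]; positivity),
      aux_moment_scale]
  constructor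
  · rintro ⟨μ0, V, hG⟩
    -- symmetry of γ'
    have hsymm : γ'.map (fun x : ℝ => -x) = γ' := by
      rw [hγ']
      ext A hA
      rw [Measure.map_apply measurable_neg hA,
        Measure.bind_apply (measurable_neg hA) hKmeas.aemeasurable, Measure.bind_apply hA hKmeas.aemeasurable]
      refine lintegral_congr fun z => ?_
      rw [← Measure.map_apply measurable_neg hA, _root_.gaussianReal_neg]
    have hμ0 : μ0 = 0 := by
      have hmapG : (gaussianReal μ0 V).map (fun x : ℝ => -x) = gaussianReal μ0 V := by
        rw [← hG]; exact hsymm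
      rw [show (fun x : ℝ => -x) = ((-1 : ℝ) * ·) by ext x; ring,
        gaussianReal_map_const_mul] at hmapG
      have h2 := congrArg (fun μ : Measure ℝ => ∫ x, x ∂μ) hmapG
      simp only [aux_integral_id_gaussianReal] at h2
      linarith
    rw [hμ0] at hG
    -- moment identities
    have key : ∀ k : ℕ, (∫ z, (z - m) ^ (2*k) ∂ν) * (σp ^ (2*k) * gmom k)
        = (V:ℝ) ^ k * gmom k := by
      intro k
      have hmeasf : Measurable fun x : ℝ => ENNReal.ofReal (x ^ (2*k)) :=
        Measurable.ennreal_ofReal (by fun_prop)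
      have h1 : ∫⁻ x, ENNReal.ofReal (x ^ (2*k)) ∂γ'
          = ∫⁻ z, ∫⁻ x, ENNReal.ofReal (x ^ (2*k))
              ∂(gaussianReal 0 (((z - m) ^ 2 * σp ^ 2).toNNReal)) ∂ν := by
        rw [hγ']; exact Measure.lintegral_bind hKmeas.aemeasurable hmeasf.aemeasurable
      have hIk : Integrable (fun z => (z - m) ^ (2*k) * (σp ^ (2*k) * gmom k)) ν :=
        (hIntPow (2*k)).mul_const _
      have h2 : ENNReal.ofReal (∫ z, (z - m) ^ (2*k) * (σp ^ (2*k) * gmom k) ∂ν)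
          = ENNReal.ofReal ((V:ℝ) ^ k * gmom k) := by
        rw [ofReal_integral_eq_lintegral_ofReal hIk (Filter.Eventually.of_forall fun z => by
          have := (gmom_pos k).le
          have h0 : (0:ℝ) ≤ (z - m) ^ (2*k) := by rw [pow_mul]; positivity
          positivity)]
        rw [show ∫⁻ z, ENNReal.ofReal ((z - m) ^ (2*k) * (σp ^ (2*k) * gmom k)) ∂ν
            = ∫⁻ z, ∫⁻ x, ENNReal.ofReal (x ^ (2*k))
                ∂(gaussianReal 0 (((z - m) ^ 2 * σp ^ 2).toNNReal)) ∂ν from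
          lintegral_congr fun z => by
            rw [hinner _ k]
            congr 1
            rw [Real.coe_toNNReal _ (by positivity)]
            rw [mul_pow, ← pow_mul, ← pow_mul]
            ring]
        rw [← h1, hG, hinner V k]
      rw [ENNReal.ofReal_eq_ofReal_iff (integral_nonneg fun z => by
          have := (gmom_pos k).le
          have h0 : (0:ℝ) ≤ (z - m) ^ (2*k) := by rw [pow_mul]; positivity
          positivity)
        (by have := (gmom_pos k).le; positivity)] at h2
      rw [← h2, integral_mul_const]
    -- extract k = 1, 2
    have key1' : (∫ z, (z - m) ^ 2 ∂ν) * σp ^ 2 = (V:ℝ) := by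
      have h := key 1
      rw [← mul_assoc] at h
      have h2 := mul_right_cancel₀ (gmom_pos 1).ne' h
      norm_num at h2
      exact h2
    have key2' : (∫ z, (z - m) ^ 4 ∂ν) * σp ^ 4 = (V:ℝ) ^ 2 := by
      have h := key 2
      rw [← mul_assoc] at h
      have h2 := mul_right_cancel₀ (gmom_pos 2).ne' h
      norm_num at h2
      exact h2
    set c := ∫ z, (z - m) ^ 2 ∂ν with hc
    have hc0 : 0 ≤ c := integral_nonneg fun z => sq_nonneg _
    have hI4 : ∫ z, (z - m) ^ 4 ∂ν = c ^ 2 := by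
      have hσ4 : σp ^ 4 ≠ 0 := by positivity
      have : (∫ z, (z - m) ^ 4 ∂ν) * σp ^ 4 = c ^ 2 * σp ^ 4 := by
        rw [key2', ← key1']; ring
      exact mul_right_cancel₀ hσ4 this
    -- variance of (z-m)^2 is zero
    have hzero : ∫ z, ((z - m) ^ 2 - c) ^ 2 ∂ν = 0 := by
      have hrw : (fun z => ((z - m) ^ 2 - c) ^ 2)
          = fun z => ((z - m) ^ 4 - (2 * c) * (z - m) ^ 2) + c ^ 2 := by
        ext z; ring
      have hInt2 : Integrable (fun z => (z - m) ^ 4 - 2 * c * (z - m) ^ 2) ν := by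
        exact (hIntPow 4).sub ((hIntPow 2).const_mul (2*c))
      rw [hrw, integral_add hInt2 (integrable_const _),
        integral_sub (hIntPow 4) ((hIntPow 2).const_mul (2*c)),
        integral_const_mul, integral_const, probReal_univ, hI4]
      simp only [ENNReal.toReal_one, one_smul, smul_eq_mul]
      have hcc : ∫ (a : ℝ), (a - m) ^ 2 ∂ν = c := hc.symm
      rw [hcc]
      ring
    have hIntSq : Integrable (fun z => ((z - m) ^ 2 - c) ^ 2) ν := by
      have : Integrable (fun z => ((z - m) ^ 4 - (2 * c) * (z - m) ^ 2) + c ^ 2) ν :=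
        ((hIntPow 4).sub ((hIntPow 2).const_mul (2*c))).add (integrable_const _)
      exact this.congr (Filter.Eventually.of_forall fun z => by ring)
    have hae : ∀ᵐ z ∂ν, (z - m) ^ 2 = c := by
      have := (integral_eq_zero_iff_of_nonneg (fun z => sq_nonneg _) hIntSq).mp hzero
      filter_upwards [this] with z hz
      have : ((z - m) ^ 2 - c) ^ 2 = 0 := hz
      have h10 := (pow_eq_zero_iff (two_ne_zero)).mp this
      linarith [h10]
    set s := Real.sqrt c with hsdef
    have hs2 : s ^ 2 = c := Real.sq_sqrt hc0
    have hae2 : ∀ᵐ z ∂ν, z = m + s ∨ z = m - s := by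
      filter_upwards [hae] with z hz
      have hfac : (z - (m + s)) * (z - (m - s)) = 0 := by linear_combination hz - hs2
      rcases mul_eq_zero.mp hfac with h | h
      · left; linarith [sub_eq_zero.mp h]
      · right; linarith [sub_eq_zero.mp h]
    by_cases hs : s = 0
    · -- ν = dirac m
      have hd : ν = Measure.dirac m := by
        apply aux_ae_dirac
        filter_upwards [hae2] with z hz
        rcases hz with h | h <;> rw [h, hs] <;> ring
      refine ⟨m, m, ?_⟩
      rw [hd, ← add_smul]
      have : (1/2 : ℝ≥0∞) + 1/2 = 1 := ENNReal.add_halves 1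
      rw [this, one_smul]
    · have hs0 : 0 < s := lt_of_le_of_ne (Real.sqrt_nonneg c) (Ne.symm hs)
      have hxy : m + s ≠ m - s := by intro h; apply hs; linarith
      obtain ⟨hν, hsum⟩ := aux_two_point ν hxy hae2
      set p := ν {m + s} with hp
      set q := ν {m - s} with hq
      have hpt : p ≠ ⊤ := (measure_ne_top ν _)
      have hqt : q ≠ ⊤ := (measure_ne_top ν _)
      have hsumR : p.toReal + q.toReal = 1 := by
        rw [← ENNReal.toReal_add hpt hqt, hsum, ENNReal.toReal_one]
      -- mean
      have hIdd : ∀ t : ℝ, Integrable (fun z : ℝ => z) (Measure.dirac t) :=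
        fun t => (integrable_const t).congr (MeasureTheory.ae_eq_dirac (fun z : ℝ => z)).symm
      have hmean : m = p.toReal * (m + s) + q.toReal * (m - s) := by
        conv_lhs => rw [hm, hν]
        rw [integral_add_measure (((hIdd _).smul_measure hpt)) (((hIdd _).smul_measure hqt)),
          integral_smul_measure, integral_smul_measure, integral_dirac, integral_dirac]
        simp [smul_eq_mul]
      have hd : (p.toReal - q.toReal) * s = 0 := by
        linear_combination (-1 : ℝ) * hmean - m * hsumR
      have hpq : p.toReal = q.toReal := by
        rcases mul_eq_zero.mp hd with h | h
        · linarith [sub_eq_zero.mp h]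
        · exact absurd h hs
      have hphalf : p.toReal = 1/2 := by linarith
      have hqhalf : q.toReal = 1/2 := by linarith
      have hhalf : ENNReal.ofReal (1/2 : ℝ) = (1/2 : ℝ≥0∞) := by
        rw [ENNReal.ofReal_div_of_pos (by norm_num)]
        norm_num
      have hpE : p = (1/2 : ℝ≥0∞) := by
        rw [← ENNReal.ofReal_toReal hpt, hphalf, hhalf]
      have hqE : q = (1/2 : ℝ≥0∞) := by
        rw [← ENNReal.ofReal_toReal hqt, hqhalf, hhalf]
      exact ⟨m + s, m - s, by rw [hν, hpE, hqE]⟩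
  · rintro ⟨a, b, hab⟩
    have hIdd : ∀ t : ℝ, Integrable (fun z : ℝ => z) (Measure.dirac t) :=
      fun t => (integrable_const t).congr (MeasureTheory.ae_eq_dirac (fun z : ℝ => z)).symm
    have hhalf_ne : (1/2 : ℝ≥0∞) ≠ ⊤ := by norm_num
    have hmean : m = (a + b) / 2 := by
      rw [hm, hab, integral_add_measure ((hIdd _).smul_measure hhalf_ne)
        ((hIdd _).smul_measure hhalf_ne), integral_smul_measure, integral_smul_measure,
        integral_dirac, integral_dirac]
      simp [smul_eq_mul]
      norm_num
      ring
    have hba : ((b - m) ^ 2 * σp ^ 2).toNNReal = ((a - m) ^ 2 * σp ^ 2).toNNReal := by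
      have : (b - m) ^ 2 = (a - m) ^ 2 := by rw [hmean]; ring
      rw [this]
    refine ⟨0, ((a - m) ^ 2 * σp ^ 2).toNNReal, ?_⟩
    rw [hγ']
    ext A hA
    rw [Measure.bind_apply hA hKmeas.aemeasurable, hab]
    have hKA : Measurable fun z : ℝ => gaussianReal 0 (((z - m) ^ 2 * σp ^ 2).toNNReal) A := by
      exact (Measure.measurable_coe hA).comp hKmeas
    rw [lintegral_add_measure, lintegral_smul_measure, lintegral_smul_measure,
      lintegral_dirac' _ hKA, lintegral_dirac' _ hKA]
    rw [hba, smul_eq_mul, ← add_mul, ENNReal.add_halves, one_mul]
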